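/- For every λ ∈ ℂ, the sequence φ_λ(x) = Σ_{k=0}^x ((-λ)^k / k!) · C(x,k) satisfies the eigenvalue equation for L_0: -(x+1)φ_λ(x+1) + (2x+1)φ_λ(x) - x φ_λ(x-1) = λ φ_λ(x) for all x ≥ 1, and -φ_λ(1) + φ_λ(0) = λ φ_λ(0). -/

import Mathlib

open Finset

noncomputable def phiC (lam : ℂ) (x : ℕ) : ℂ :=
  ∑ k ∈ Finset.range (x + 1), (-lam) ^ k / (k.factorial : ℂ) * (x.choose k : ℂ)

lemma subC (m j : ℕ) :
    ((m : ℂ) + 1 - j) * ((m + 1).choose j : ℂ) = ((m : ℂ) + 1) * (m.choose j : ℂ) := by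
  rcases le_or_gt j (m + 1) with h | h
  · have h1 : (m + 1) * Nat.choose m j = Nat.choose (m + 1) j * (m + 1 - j) := by
      rw [show m + 1 = Nat.succ m from rfl, Nat.add_one_mul_choose_eq]
      rw [← Nat.choose_succ_right_eq]
    have := congrArg (fun n : ℕ => (n : ℂ)) h1
    push_cast [Nat.cast_sub h] at this
    linear_combination -this
  · have h1 : Nat.choose (m + 1) j = 0 := Nat.choose_eq_zero_of_lt h
    have h2 : Nat.choose m j = 0 := Nat.choose_eq_zero_of_lt (by omega)
    simp [h1, h2]

lemma keyC (m k : ℕ) :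
    -((m : ℂ) + 2) * ((m + 2).choose k : ℂ) + (2 * ((m : ℂ) + 1) + 1) * ((m + 1).choose k : ℂ)
      - ((m : ℂ) + 1) * (m.choose k : ℂ)
      = -(k : ℂ) * ((m + 1).choose (k - 1) : ℂ) := by
  cases k with
  | zero => simp; ring
  | succ j =>
    have p1 : (m + 2).choose (j + 1) = (m + 1).choose j + (m + 1).choose (j + 1) :=
      Nat.choose_succ_succ' (m + 1) j
    have p2 : (m + 1).choose (j + 1) = m.choose j + m.choose (j + 1) :=
      Nat.choose_succ_succ' m j
    have hs := subC m j
    simp only [p1, p2, Nat.succ_sub_one]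
    push_cast
    linear_combination -hs

theorem stmt_13 (lam : ℂ) :
    (∀ x : ℕ, 1 ≤ x →
      -((x : ℂ) + 1) * phiC lam (x + 1) + (2 * (x : ℂ) + 1) * phiC lam x
        - (x : ℂ) * phiC lam (x - 1) = lam * phiC lam x) ∧
    -phiC lam 1 + phiC lam 0 = lam * phiC lam 0 := by
  constructor
  · intro x hx
    obtain ⟨m, rfl⟩ : ∃ m, x = m + 1 := ⟨x - 1, by omega⟩
    set a : ℕ → ℂ := fun k => (-lam) ^ k / (k.factorial : ℂ) with ha
    have e1 : phiC lam (m + 1 + 1) = ∑ k ∈ range (m + 3), a k * ((m + 2).choose k : ℂ) := by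
      simp [phiC, ha]
    have e2 : phiC lam (m + 1) = ∑ k ∈ range (m + 3), a k * ((m + 1).choose k : ℂ) := by
      rw [Finset.sum_range_succ, Nat.choose_eq_zero_of_lt (by omega)]
      simp [phiC, ha]
    have e3 : phiC lam (m + 1 - 1) = ∑ k ∈ range (m + 3), a k * ((m).choose k : ℂ) := by
      rw [Finset.sum_range_succ, Nat.choose_eq_zero_of_lt (by omega),
        Finset.sum_range_succ, Nat.choose_eq_zero_of_lt (by omega)]
      simp [phiC, ha]
    have lamA : ∀ k : ℕ, lam * (a k * ((m + 1).choose k : ℂ))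
        = a (k + 1) * (-((k : ℂ) + 1)) * ((m + 1).choose k : ℂ) := by
      intro k
      have hk : (k.factorial : ℂ) ≠ 0 := Nat.cast_ne_zero.2 k.factorial_ne_zero
      have hk1 : ((k : ℂ) + 1) ≠ 0 := Nat.cast_add_one_ne_zero k
      have hf : ((k + 1).factorial : ℂ) = ((k : ℂ) + 1) * (k.factorial : ℂ) := by
        rw [Nat.factorial_succ]; push_cast; ring
      simp only [ha, hf, pow_succ]
      field_simp
    have rhs : lam * phiC lam (m + 1)
        = ∑ k ∈ range (m + 3), a k * (-(k : ℂ)) * ((m + 1).choose (k - 1) : ℂ) := by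
      rw [Finset.sum_range_succ' (fun k => a k * (-(k : ℂ)) * ((m + 1).choose (k - 1) : ℂ)) (m + 2)]
      simp only [Nat.cast_zero, neg_zero, mul_zero, zero_mul, add_zero]
      have : phiC lam (m + 1) = ∑ k ∈ range (m + 2), a k * ((m + 1).choose k : ℂ) := by
        simp [phiC, ha]
      rw [this, Finset.mul_sum]
      refine Finset.sum_congr rfl fun k _ => ?_
      rw [lamA k]
      push_cast
      ring_nf
    rw [rhs, e1, e2, e3, Finset.mul_sum, Finset.mul_sum, Finset.mul_sum,
      ← Finset.sum_add_distrib, ← Finset.sum_sub_distrib]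
    refine Finset.sum_congr rfl fun k _ => ?_
    have := keyC m k
    push_cast
    push_cast at this
    linear_combination a k * this
  · simp [phiC, Finset.sum_range_succ]
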